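/- Let (m_x) be i.i.d. random variables with values in [m_min, m_max], 0 < m_min, and fix β₁,…,β_n > 0. For every n ≥ 2, all admissible indices x, y, and all nonnegative integers k, k' with k + k' < 2|x − y| − 2, one has Cov( ⟨δ_x, (A_r^β)^k δ_x⟩ , ⟨δ_y, (A_r^β)^{k'} δ_y⟩ ) = 0 (for 1 ≤ x, y ≤ n−1) and Cov( ⟨δ_x, (A_p^β)^k δ_x⟩ , ⟨δ_y, (A_r^β)^{k'} δ_y⟩ ) = 0 (for 1 ≤ x ≤ n, 1 ≤ y ≤ n−1), where A_p^β and A_r^β are built from the random masses m₁,…,m_n and Cov(X,Y) = E[XY] − E[X]E[Y]. -/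

import Mathlib

open Matrix MeasureTheory ProbabilityTheory Filter

noncomputable section

/-- The discrete gradient `∇₋` (an `n × (n−1)` matrix, 0-indexed). -/
def nablaMinus (n : ℕ) : Matrix (Fin n) (Fin (n-1)) ℝ :=
  Matrix.of fun x y => if (x : ℕ) = (y : ℕ) then 1 else if (x : ℕ) = (y : ℕ) + 1 then -1 else 0

/-- The discrete gradient `∇₊ = −(∇₋)ᵀ`. -/
def nablaPlus (n : ℕ) : Matrix (Fin (n-1)) (Fin n) ℝ := -(nablaMinus n)ᵀ

/-- `M^{-1/2}` for the diagonal mass matrix. -/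
def invSqrtMass (n : ℕ) (m : Fin n → ℝ) : Matrix (Fin n) (Fin n) ℝ :=
  Matrix.diagonal fun x => 1 / Real.sqrt (m x)

/-- `M⁻¹`. -/
def massInv (n : ℕ) (m : Fin n → ℝ) : Matrix (Fin n) (Fin n) ℝ :=
  Matrix.diagonal fun x => (m x)⁻¹

/-- `A_p⁰ = M^{-1/2} (−Δ) M^{-1/2}` with `Δ = ∇₋∇₊`. -/
def Ap0 (n : ℕ) (m : Fin n → ℝ) : Matrix (Fin n) (Fin n) ℝ :=
  invSqrtMass n m * (-(nablaMinus n * nablaPlus n)) * invSqrtMass n m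

/-- `A_r⁰ = −∇₊ M⁻¹ ∇₋`. -/
def Ar0 (n : ℕ) (m : Fin n → ℝ) : Matrix (Fin (n-1)) (Fin (n-1)) ℝ :=
  -(nablaPlus n * massInv n m * nablaMinus n)

/-- `M_β^{-1/2} = diag(√(β_x/m_x))`. -/
def MbetaInvSqrt (n : ℕ) (m β : Fin n → ℝ) : Matrix (Fin n) (Fin n) ℝ :=
  Matrix.diagonal fun x => Real.sqrt (β x / m x)

/-- `M_β⁻¹ = diag(β_x/m_x)`. -/
def MbetaInv (n : ℕ) (m β : Fin n → ℝ) : Matrix (Fin n) (Fin n) ℝ :=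
  Matrix.diagonal fun x => β x / m x

/-- `β° = diag(β₁,…,β_{n−1})`. -/
def betaCirc (n : ℕ) (β : Fin n → ℝ) : Matrix (Fin (n-1)) (Fin (n-1)) ℝ :=
  Matrix.diagonal fun y => β (Fin.castLE (Nat.sub_le n 1) y)

/-- `(β°)^{1/2}`. -/
def betaCircSqrt (n : ℕ) (β : Fin n → ℝ) : Matrix (Fin (n-1)) (Fin (n-1)) ℝ :=
  Matrix.diagonal fun y => Real.sqrt (β (Fin.castLE (Nat.sub_le n 1) y))

/-- `A_p^β = M_β^{-1/2} (−∇₋ β° ∇₊) M_β^{-1/2}`. -/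
def ApBeta (n : ℕ) (m β : Fin n → ℝ) : Matrix (Fin n) (Fin n) ℝ :=
  MbetaInvSqrt n m β * (-(nablaMinus n * betaCirc n β * nablaPlus n)) * MbetaInvSqrt n m β

/-- `A_r^β = (β°)^{1/2} (−∇₊ M_β⁻¹ ∇₋) (β°)^{1/2}`. -/
def ArBeta (n : ℕ) (m β : Fin n → ℝ) : Matrix (Fin (n-1)) (Fin (n-1)) ℝ :=
  betaCircSqrt n β * (-(nablaPlus n * MbetaInv n m β * nablaMinus n)) * betaCircSqrt n β

/-- The function `𝔣(t) = √t coth √t` for `t > 0`, `𝔣(0) = 1`. -/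
def sqrtCoth (t : ℝ) : ℝ :=
  if t = 0 then 1 else Real.sqrt t * (Real.cosh (Real.sqrt t) / Real.sinh (Real.sqrt t))

/-- The (random) average thermal energy at site `x` (0-indexed; site `x+1` in the paper's
1-based convention), given masses `m` and local inverse temperatures `βv`.  The `A_r^β` term
is omitted at the last site. -/
def avgThermalEnergy (n : ℕ) (m βv : Fin n → ℝ) (x : Fin n) : ℝ :=
  (1 / βv x) *
    ((if h : (x : ℕ) < n - 1 then cfc sqrtCoth (ArBeta n m βv) ⟨(x : ℕ), h⟩ ⟨(x : ℕ), h⟩ else 0)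
      + cfc sqrtCoth (ApBeta n m βv) x x
      - (m x / βv x) / (∑ z, m z / βv z))

/-- The local inverse-temperature vector `β_x = β(x/n)` (1-based sites). -/
def betaVec (n : ℕ) (β : ℝ → ℝ) : Fin n → ℝ := fun x => β ((((x : ℕ) : ℝ) + 1) / n)

/-- Average thermal energy at site `x` built from a macroscopic temperature profile `β`. -/
def avgThermalProfile (n : ℕ) (β : ℝ → ℝ) (m : Fin n → ℝ) (x : Fin n) : ℝ :=
  avgThermalEnergy n m (betaVec n β) x

/-- The 0-based index in `Fin n` of the (1-based) site `max 1 k` (clamped to stay in range). -/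
def siteIdx (n : ℕ) (hn : 0 < n) (k : ℕ) : Fin n := ⟨min (max 1 k - 1) (n-1), by omega⟩

end

noncomputable section Aux

lemma ArBeta_apply' (n : ℕ) (m β : Fin n → ℝ) (a b : Fin (n-1)) :
    ArBeta n m β a b = Real.sqrt (β (Fin.castLE (Nat.sub_le n 1) a)) *
      (∑ z : Fin n, nablaMinus n z a * (β z / m z) * nablaMinus n z b) *
      Real.sqrt (β (Fin.castLE (Nat.sub_le n 1) b)) := by
  simp [ArBeta, betaCircSqrt, MbetaInv, nablaPlus, Matrix.mul_apply, Matrix.diagonal,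
    Finset.mul_sum, Finset.sum_mul, Matrix.neg_apply]

lemma ApBeta_apply' (n : ℕ) (m β : Fin n → ℝ) (a b : Fin n) :
    ApBeta n m β a b = Real.sqrt (β a / m a) *
      (∑ y : Fin (n-1), nablaMinus n a y * β (Fin.castLE (Nat.sub_le n 1) y) * nablaMinus n b y) *
      Real.sqrt (β b / m b) := by
  simp [ApBeta, betaCirc, MbetaInvSqrt, nablaPlus, Matrix.mul_apply, Matrix.diagonal,
    Finset.mul_sum, Finset.sum_mul, Matrix.neg_apply]

section Generic
variable {n N : ℕ} (A : (Fin n → ℝ) → Matrix (Fin N) (Fin N) ℝ)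

lemma pow_band (hband : ∀ m (a b : Fin N), 1 < (((a:ℕ):ℤ) - ((b:ℕ):ℤ)).natAbs → A m a b = 0) :
    ∀ (k : ℕ) (m : Fin n → ℝ) (a b : Fin N),
      (k : ℤ) < (((a:ℕ):ℤ) - ((b:ℕ):ℤ)).natAbs → (A m ^ k) a b = 0 := by
  intro k
  induction k with
  | zero =>
    intro m a b h
    have hab : a ≠ b := by
      intro e; subst e; simp at h
    simp [Matrix.one_apply, hab]
  | succ k ih =>
    intro m a b h
    rw [pow_succ', Matrix.mul_apply]
    apply Finset.sum_eq_zero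
    intro c _
    by_cases h1 : 1 < (((a:ℕ):ℤ) - ((c:ℕ):ℤ)).natAbs
    · rw [hband m a c h1, zero_mul]
    · rw [ih m c b (by omega), mul_zero]

lemma pow_loc (hband : ∀ m (a b : Fin N), 1 < (((a:ℕ):ℤ) - ((b:ℕ):ℤ)).natAbs → A m a b = 0)
    (hloc : ∀ (m m' : Fin n → ℝ) (a b : Fin N),
      (∀ z : Fin n, min (a:ℕ) (b:ℕ) ≤ (z:ℕ) → (z:ℕ) ≤ max (a:ℕ) (b:ℕ) + 1 → m z = m' z) →
      A m a b = A m' a b) :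
    ∀ (k : ℕ) (m m' : Fin n → ℝ) (a b : Fin N),
      (∀ z : Fin n, ((((z:ℕ):ℤ) - ((a:ℕ):ℤ)).natAbs + (((z:ℕ):ℤ) - ((b:ℕ):ℤ)).natAbs ≤ k ∨
        (((z:ℕ):ℤ) - 1 - ((a:ℕ):ℤ)).natAbs + (((z:ℕ):ℤ) - 1 - ((b:ℕ):ℤ)).natAbs ≤ k) → m z = m' z) →
      (A m ^ k) a b = (A m' ^ k) a b := by
  intro k
  induction k with
  | zero => intros; simp
  | succ k ih =>
    intro m m' a b hm
    rw [pow_succ', pow_succ', Matrix.mul_apply, Matrix.mul_apply]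
    refine Finset.sum_congr rfl fun c _ => ?_
    by_cases h1 : 1 < (((a:ℕ):ℤ) - ((c:ℕ):ℤ)).natAbs
    · rw [hband m a c h1, hband m' a c h1, zero_mul, zero_mul]
    · by_cases h2 : (k : ℤ) < (((c:ℕ):ℤ) - ((b:ℕ):ℤ)).natAbs
      · rw [pow_band A hband k m c b h2, pow_band A hband k m' c b h2, mul_zero, mul_zero]
      · have e1 : A m a c = A m' a c :=
          hloc m m' a c (fun z hz1 hz2 => hm z (by omega))
        have e2 : (A m ^ k) c b = (A m' ^ k) c b :=
          ih m m' c b (fun z hz => hm z (by omega))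
        rw [e1, e2]

lemma meas_pow (hA : ∀ a b, Measurable fun m : Fin n → ℝ => A m a b) :
    ∀ (k : ℕ) (a b : Fin N), Measurable fun m => (A m ^ k) a b := by
  intro k
  induction k with
  | zero =>
    intro a b
    simp only [pow_zero, Matrix.one_apply]
    exact measurable_const
  | succ k ih =>
    intro a b
    simp only [pow_succ, Matrix.mul_apply]
    exact Finset.measurable_sum _ fun c _ => (ih a c).mul (hA c b)

end Generic

lemma ArBeta_band (n : ℕ) (β m : Fin n → ℝ) (a b : Fin (n-1))
    (h : 1 < (((a:ℕ):ℤ) - ((b:ℕ):ℤ)).natAbs) : ArBeta n m β a b = 0 := by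
  rw [ArBeta_apply', Finset.sum_eq_zero, mul_zero, zero_mul]
  intro z _
  simp only [nablaMinus, Matrix.of_apply]
  split_ifs <;> first | ring1 | (exfalso; omega)

lemma ApBeta_band (n : ℕ) (β m : Fin n → ℝ) (a b : Fin n)
    (h : 1 < (((a:ℕ):ℤ) - ((b:ℕ):ℤ)).natAbs) : ApBeta n m β a b = 0 := by
  rw [ApBeta_apply', Finset.sum_eq_zero, mul_zero, zero_mul]
  intro y _
  simp only [nablaMinus, Matrix.of_apply]
  split_ifs <;> first | ring1 | (exfalso; omega)

lemma ArBeta_loc (n : ℕ) (β m m' : Fin n → ℝ) (a b : Fin (n-1))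
    (hm : ∀ z : Fin n, min (a:ℕ) (b:ℕ) ≤ (z:ℕ) → (z:ℕ) ≤ max (a:ℕ) (b:ℕ) + 1 → m z = m' z) :
    ArBeta n m β a b = ArBeta n m' β a b := by
  rw [ArBeta_apply', ArBeta_apply']
  congr 2
  refine Finset.sum_congr rfl fun z _ => ?_
  by_cases hza : (z:ℕ) = (a:ℕ) ∨ (z:ℕ) = (a:ℕ) + 1
  · by_cases hzb : (z:ℕ) = (b:ℕ) ∨ (z:ℕ) = (b:ℕ) + 1
    · rw [hm z (by omega) (by omega)]
    · simp only [nablaMinus, Matrix.of_apply]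
      split_ifs <;> first | ring1 | (exfalso; omega)
  · simp only [nablaMinus, Matrix.of_apply]
    split_ifs <;> first | ring1 | (exfalso; omega)

lemma ApBeta_loc (n : ℕ) (β m m' : Fin n → ℝ) (a b : Fin n)
    (hm : ∀ z : Fin n, min (a:ℕ) (b:ℕ) ≤ (z:ℕ) → (z:ℕ) ≤ max (a:ℕ) (b:ℕ) + 1 → m z = m' z) :
    ApBeta n m β a b = ApBeta n m' β a b := by
  rw [ApBeta_apply', ApBeta_apply', hm a (by omega) (by omega), hm b (by omega) (by omega)]

lemma ArBeta_meas (n : ℕ) (β : Fin n → ℝ) (a b : Fin (n-1)) :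
    Measurable fun m : Fin n → ℝ => ArBeta n m β a b := by
  simp only [ArBeta_apply']
  exact (measurable_const.mul (Finset.measurable_sum _ fun z _ =>
    (measurable_const.mul (measurable_const.div (measurable_pi_apply z))).mul
      measurable_const)).mul measurable_const

lemma ApBeta_meas (n : ℕ) (β : Fin n → ℝ) (a b : Fin n) :
    Measurable fun m : Fin n → ℝ => ApBeta n m β a b := by
  simp only [ApBeta_apply']
  exact ((measurable_const.div (measurable_pi_apply a)).sqrt.mul measurable_const).mul
    (measurable_const.div (measurable_pi_apply b)).sqrt

lemma cov_eq {Ω : Type*} [MeasurableSpace Ω] (μ : Measure Ω) [IsProbabilityMeasure μ]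
    (mass : ℕ → Ω → ℝ) (hmeas : ∀ i, Measurable (mass i))
    (hindep : iIndepFun mass μ)
    {n N N' : ℕ}
    (A : (Fin n → ℝ) → Matrix (Fin N) (Fin N) ℝ)
    (B : (Fin n → ℝ) → Matrix (Fin N') (Fin N') ℝ)
    (hbandA : ∀ m (a b : Fin N), 1 < (((a:ℕ):ℤ) - ((b:ℕ):ℤ)).natAbs → A m a b = 0)
    (hlocA : ∀ (m m' : Fin n → ℝ) (a b : Fin N),
      (∀ z : Fin n, min (a:ℕ) (b:ℕ) ≤ (z:ℕ) → (z:ℕ) ≤ max (a:ℕ) (b:ℕ) + 1 → m z = m' z) →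
      A m a b = A m' a b)
    (hmA : ∀ a b, Measurable fun m => A m a b)
    (hbandB : ∀ m (a b : Fin N'), 1 < (((a:ℕ):ℤ) - ((b:ℕ):ℤ)).natAbs → B m a b = 0)
    (hlocB : ∀ (m m' : Fin n → ℝ) (a b : Fin N'),
      (∀ z : Fin n, min (a:ℕ) (b:ℕ) ≤ (z:ℕ) → (z:ℕ) ≤ max (a:ℕ) (b:ℕ) + 1 → m z = m' z) →
      B m a b = B m' a b)
    (hmB : ∀ a b, Measurable fun m => B m a b)
    (k k' : ℕ) (x : Fin N) (y : Fin N')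
    (hgap : (k:ℤ) + (k':ℤ) < 2 * |((x:ℕ):ℤ) - ((y:ℕ):ℤ)| - 2) :
    ∫ ω, (A (fun z => mass z ω) ^ k) x x * (B (fun z => mass z ω) ^ k') y y ∂μ
      = (∫ ω, (A (fun z => mass z ω) ^ k) x x ∂μ)
        * (∫ ω, (B (fun z => mass z ω) ^ k') y y ∂μ) := by
  classical
  rw [Int.abs_eq_natAbs] at hgap
  set S : Finset ℕ := (Finset.range n).filter
    (fun z => ((z:ℤ) - ((x:ℕ):ℤ)).natAbs + ((z:ℤ) - ((x:ℕ):ℤ)).natAbs ≤ k ∨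
      ((z:ℤ) - 1 - ((x:ℕ):ℤ)).natAbs + ((z:ℤ) - 1 - ((x:ℕ):ℤ)).natAbs ≤ k) with hS
  set T : Finset ℕ := (Finset.range n).filter
    (fun z => ((z:ℤ) - ((y:ℕ):ℤ)).natAbs + ((z:ℤ) - ((y:ℕ):ℤ)).natAbs ≤ k' ∨
      ((z:ℤ) - 1 - ((y:ℕ):ℤ)).natAbs + ((z:ℤ) - 1 - ((y:ℕ):ℤ)).natAbs ≤ k') with hT
  have hST : Disjoint S T := by
    rw [Finset.disjoint_left]
    intro z hzS hzT
    rw [hS, Finset.mem_filter] at hzS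
    rw [hT, Finset.mem_filter] at hzT
    omega
  let extS : (S → ℝ) → (Fin n → ℝ) := fun g z => if h : (z:ℕ) ∈ S then g ⟨z, h⟩ else 0
  let extT : (T → ℝ) → (Fin n → ℝ) := fun g z => if h : (z:ℕ) ∈ T then g ⟨z, h⟩ else 0
  let F : (S → ℝ) → ℝ := fun g => (A (extS g) ^ k) x x
  let G : (T → ℝ) → ℝ := fun g => (B (extT g) ^ k') y y
  have hmExtS : Measurable extS := by
    refine measurable_pi_lambda _ fun z => ?_
    by_cases h : (z:ℕ) ∈ S
    · simpa only [extS, dif_pos h] using measurable_pi_apply (⟨(z:ℕ), h⟩ : S)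
    · simpa only [extS, dif_neg h] using measurable_const
  have hmExtT : Measurable extT := by
    refine measurable_pi_lambda _ fun z => ?_
    by_cases h : (z:ℕ) ∈ T
    · simpa only [extT, dif_pos h] using measurable_pi_apply (⟨(z:ℕ), h⟩ : T)
    · simpa only [extT, dif_neg h] using measurable_const
  have hmF : Measurable F := (meas_pow A hmA k x x).comp hmExtS
  have hmG : Measurable G := (meas_pow B hmB k' y y).comp hmExtT
  have hXeq : ∀ ω, F (fun i : S => mass i ω) = (A (fun z => mass z ω) ^ k) x x := by
    intro ω
    refine pow_loc A hbandA hlocA k _ _ x x fun z hz => ?_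
    have hzS : (z:ℕ) ∈ S := by
      rw [hS, Finset.mem_filter, Finset.mem_range]
      exact ⟨z.isLt, by omega⟩
    simp only [extS, dif_pos hzS]
  have hYeq : ∀ ω, G (fun i : T => mass i ω) = (B (fun z => mass z ω) ^ k') y y := by
    intro ω
    refine pow_loc B hbandB hlocB k' _ _ y y fun z hz => ?_
    have hzT : (z:ℕ) ∈ T := by
      rw [hT, Finset.mem_filter, Finset.mem_range]
      exact ⟨z.isLt, by omega⟩
    simp only [extT, dif_pos hzT]
  have hXfun : (fun ω => F (fun i : S => mass i ω))
      = fun ω => (A (fun z => mass z ω) ^ k) x x := funext hXeq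
  have hYfun : (fun ω => G (fun i : T => mass i ω))
      = fun ω => (B (fun z => mass z ω) ^ k') y y := funext hYeq
  have hind : IndepFun (fun ω => F (fun i : S => mass i ω))
      (fun ω => G (fun i : T => mass i ω)) μ :=
    (hindep.indepFun_finset S T hST hmeas).comp hmF hmG
  have hmX : Measurable fun ω => F (fun i : S => mass i ω) :=
    hmF.comp (measurable_pi_lambda _ fun i => hmeas i)
  have hmY : Measurable fun ω => G (fun i : T => mass i ω) :=
    hmG.comp (measurable_pi_lambda _ fun i => hmeas i)
  have hprod : ∫ ω, (A (fun z => mass z ω) ^ k) x x * (B (fun z => mass z ω) ^ k') y y ∂μ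
      = ∫ ω, F (fun i : S => mass i ω) * G (fun i : T => mass i ω) ∂μ := by
    refine integral_congr_ae (Filter.Eventually.of_forall fun ω => ?_)
    simp only [hXeq, hYeq]
  rw [hprod, ← hXfun, ← hYfun]
  exact hind.integral_fun_mul_eq_mul_integral hmX.aestronglyMeasurable hmY.aestronglyMeasurable

end Aux

open Matrix MeasureTheory ProbabilityTheory in
/-- for i.i.d. masses and `k + k' < 2|x − y| − 2`, the covariances of the
diagonal entries of powers of `A_r^β` (resp. of `A_p^β` against `A_r^β`) vanish. -/
theorem stmt3 {Ω : Type*} [MeasurableSpace Ω] (μ : Measure Ω) [IsProbabilityMeasure μ]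
    (mass : ℕ → Ω → ℝ) (hmeas : ∀ i, Measurable (mass i))
    (hindep : iIndepFun mass μ)
    (hident : ∀ i j, IdentDistrib (mass i) (mass j) μ μ)
    (mmin mmax : ℝ) (h0 : 0 < mmin) (hmm : mmin ≤ mmax)
    (hrange : ∀ i ω, mass i ω ∈ Set.Icc mmin mmax)
    (n : ℕ) (hn : 2 ≤ n) (β : Fin n → ℝ) (hβ : ∀ x, 0 < β x) (k k' : ℕ) :
    (∀ x y : Fin (n-1), (k : ℤ) + (k' : ℤ) < 2 * |(x : ℤ) - (y : ℤ)| - 2 →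
      ∫ ω, (((ArBeta n (fun z => mass z ω) β) ^ k) x x)
          * (((ArBeta n (fun z => mass z ω) β) ^ k') y y) ∂μ
        = (∫ ω, ((ArBeta n (fun z => mass z ω) β) ^ k) x x ∂μ)
          * (∫ ω, ((ArBeta n (fun z => mass z ω) β) ^ k') y y ∂μ)) ∧
    (∀ (x : Fin n) (y : Fin (n-1)), (k : ℤ) + (k' : ℤ) < 2 * |(x : ℤ) - (y : ℤ)| - 2 →
      ∫ ω, (((ApBeta n (fun z => mass z ω) β) ^ k) x x)
          * (((ArBeta n (fun z => mass z ω) β) ^ k') y y) ∂μ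
        = (∫ ω, ((ApBeta n (fun z => mass z ω) β) ^ k) x x ∂μ)
          * (∫ ω, ((ArBeta n (fun z => mass z ω) β) ^ k') y y ∂μ)) := by
  constructor
  · intro x y hgap
    exact cov_eq μ mass hmeas hindep (fun m => ArBeta n m β) (fun m => ArBeta n m β)
      (ArBeta_band n β) (ArBeta_loc n β) (ArBeta_meas n β)
      (ArBeta_band n β) (ArBeta_loc n β) (ArBeta_meas n β) k k' x y hgap
  · intro x y hgap
    exact cov_eq μ mass hmeas hindep (fun m => ApBeta n m β) (fun m => ArBeta n m β)
      (ApBeta_band n β) (ApBeta_loc n β) (ApBeta_meas n β)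
      (ArBeta_band n β) (ArBeta_loc n β) (ArBeta_meas n β) k k' x y hgap
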